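/- arXiv:1409.2459 — 7 statements merged into one kernel-verified Lean document; each statement's English description precedes it below -/
import Mathlib

section
/- For positive integers r and n with 4r ≡ 1 (mod n), the gcd of 3^r + 2 and 3^n − 1 divides 13; moreover, since 3^r + 2 ≡ 3, 5, or 11 (mod 13) for every r, we have gcd(3^r + 2, 3^n − 1) = 1. -/
lemma aux_mod13 (r' : ℕ) : (3 ^ r' + 2) % 13 = 3 ∨ (3 ^ r' + 2) % 13 = 5 ∨ (3 ^ r' + 2) % 13 = 11 := by
  have h : 3 ^ r' % 13 = 3 ^ (r' % 3) % 13 := by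
    conv_lhs => rw [← Nat.div_add_mod r' 3]
    rw [pow_add, pow_mul, Nat.mul_mod, Nat.pow_mod]
    norm_num
  have hm : r' % 3 = 0 ∨ r' % 3 = 1 ∨ r' % 3 = 2 := by omega
  rcases hm with hm | hm | hm <;> rw [hm] at h <;> norm_num at h <;> omega

theorem stmt_0 (r n : ℕ) (hr : 0 < r) (hn : 0 < n) (h : 4 * r ≡ 1 [MOD n]) :
    Nat.gcd (3 ^ r + 2) (3 ^ n - 1) ∣ 13 ∧
    (∀ r' : ℕ, (3 ^ r' + 2) % 13 = 3 ∨ (3 ^ r' + 2) % 13 = 5 ∨ (3 ^ r' + 2) % 13 = 11) ∧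
    Nat.gcd (3 ^ r + 2) (3 ^ n - 1) = 1 := by
  set d := Nat.gcd (3 ^ r + 2) (3 ^ n - 1) with hd
  have hdpos : 0 < d := Nat.gcd_pos_of_pos_left _ (by positivity)
  haveI : NeZero d := ⟨hdpos.ne'⟩
  have h1 : d ∣ 3 ^ r + 2 := Nat.gcd_dvd_left _ _
  have h2 : d ∣ 3 ^ n - 1 := Nat.gcd_dvd_right _ _
  have hpow : (1 : ℕ) ≤ 3 ^ n := Nat.one_le_pow _ _ (by norm_num)
  -- in ZMod d
  have e1 : ((3 : ZMod d)) ^ r = -2 := by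
    have : ((3 ^ r + 2 : ℕ) : ZMod d) = 0 :=
      (ZMod.natCast_eq_zero_iff _ _).mpr h1
    push_cast at this
    linear_combination this
  have e2 : ((3 : ZMod d)) ^ n = 1 := by
    have : ((3 ^ n - 1 : ℕ) : ZMod d) = 0 :=
      (ZMod.natCast_eq_zero_iff _ _).mpr h2
    rw [Nat.cast_sub hpow] at this
    push_cast at this
    linear_combination this
  obtain ⟨k, hk⟩ : n ∣ 4 * r - 1 := (Nat.modEq_iff_dvd' (by omega)).mp h.symm
  have hk' : 4 * r = n * k + 1 := by omega
  have e3 : ((3 : ZMod d)) ^ (4 * r) = 3 := by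
    rw [hk', pow_add, pow_mul, e2, one_pow, pow_one, one_mul]
  have e4 : ((3 : ZMod d)) ^ (4 * r) = 16 := by
    rw [mul_comm, pow_mul, e1]; ring
  have e13 : ((13 : ℕ) : ZMod d) = 0 := by
    push_cast
    linear_combination e3 - e4
  have hd13 : d ∣ 13 := (ZMod.natCast_eq_zero_iff _ _).mp e13
  refine ⟨hd13, aux_mod13, ?_⟩
  rcases (Nat.Prime.eq_one_or_self_of_dvd (by norm_num) d hd13) with h1' | h1'
  · exact h1'
  · exfalso
    have : (13 : ℕ) ∣ 3 ^ r + 2 := h1' ▸ h1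
    have hmod : (3 ^ r + 2) % 13 = 0 := by omega
    rcases aux_mod13 r with h' | h' | h' <;> omega
end

section
/- Let b > 1 and n be positive integers, and suppose s_i, t_i ∈ ℤ for i ∈ ℤ/nℤ satisfy ∑_{i ∈ ℤ/nℤ} s_i b^i ≡ ∑_{i ∈ ℤ/nℤ} t_i b^i (mod b^n − 1). Then there is a unique collection of integers {c_i}_{i ∈ ℤ/nℤ} such that s_i + c_{i−1} = t_i + b·c_i for all i ∈ ℤ/nℤ, given explicitly by c_i = (1/(b^n − 1)) ∑_{j=0}^{n−1} (s_{j+i+1} − t_{j+i+1}) b^j (indices mod n). -/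
open Finset

theorem stmt_1 (b n : ℕ) [NeZero n] (hb : 1 < b) (s t : ZMod n → ℤ)
    (h : (∑ i : ZMod n, s i * (b : ℤ) ^ i.val) ≡
         (∑ i : ZMod n, t i * (b : ℤ) ^ i.val) [ZMOD ((b : ℤ) ^ n - 1)]) :
    (∃! c : ZMod n → ℤ, ∀ i : ZMod n, s i + c (i - 1) = t i + (b : ℤ) * c i) ∧
    (∀ c : ZMod n → ℤ, (∀ i : ZMod n, s i + c (i - 1) = t i + (b : ℤ) * c i) →
      ∀ i : ZMod n, ((b : ℤ) ^ n - 1) * c i =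
        ∑ j ∈ Finset.range n,
          (s ((j : ZMod n) + i + 1) - t ((j : ZMod n) + i + 1)) * (b : ℤ) ^ j) := by
  have hn : n ≠ 0 := NeZero.ne n
  have hb1 : (1:ℤ) < (b:ℤ) := by exact_mod_cast hb
  set q : ℤ := (b:ℤ)^n - 1 with hqdef
  have hqpos : 0 < q := by
    have : (1:ℤ) < (b:ℤ)^n := one_lt_pow₀ hb1 hn
    simp [hqdef]; linarith
  have hq0 : q ≠ 0 := ne_of_gt hqpos
  set d : ZMod n → ℤ := fun k => s k - t k with hddef
  set S : ZMod n → ℤ := fun i => ∑ j ∈ range n, d ((j:ZMod n) + i + 1) * (b:ℤ)^j with hSdef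
  -- telescoping identity
  have tele : ∀ i : ZMod n, (b:ℤ) * S i - S (i - 1) = d i * q := by
    intro i
    have h1 : (b:ℤ) * S i = ∑ j ∈ range n, d (((j+1:ℕ):ZMod n) + i) * (b:ℤ)^(j+1) := by
      rw [hSdef, Finset.mul_sum]
      refine Finset.sum_congr rfl fun j _ => ?_
      have : (((j+1:ℕ)):ZMod n) + i = (j:ZMod n) + i + 1 := by push_cast; ring
      rw [this]; ring
    have h2 : S (i - 1) = ∑ j ∈ range n, d ((j:ZMod n) + i) * (b:ℤ)^j := by
      rw [hSdef]
      refine Finset.sum_congr rfl fun j _ => ?_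
      have : (j:ZMod n) + (i - 1) + 1 = (j:ZMod n) + i := by ring
      rw [this]
    rw [h1, h2, ← Finset.sum_sub_distrib,
      Finset.sum_range_sub (fun j => d ((j:ZMod n) + i) * (b:ℤ)^j)]
    have : ((n:ℕ):ZMod n) + i = i := by simp
    rw [this]
    simp [hqdef]; ring
  -- the formula, for any solution of the recurrence
  have formula : ∀ c : ZMod n → ℤ, (∀ i : ZMod n, s i + c (i - 1) = t i + (b : ℤ) * c i) →
      ∀ i : ZMod n, q * c i = S i := by
    intro c hc i
    have key : ∀ j : ℕ, d ((j:ZMod n) + i + 1) * (b:ℤ)^j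
        = c (((j+1:ℕ):ZMod n) + i) * (b:ℤ)^(j+1) - c ((j:ZMod n) + i) * (b:ℤ)^j := by
      intro j
      have h2 : (((j+1:ℕ)):ZMod n) + i = (j:ZMod n) + i + 1 := by push_cast; ring
      have h1 : ((j:ZMod n) + i + 1) - 1 = (j:ZMod n) + i := by ring
      have hcj := hc ((j:ZMod n) + i + 1)
      rw [h1] at hcj
      have hs : d ((j:ZMod n) + i + 1)
          = (b:ℤ) * c ((j:ZMod n) + i + 1) - c ((j:ZMod n) + i) := by
        simp only [hddef]; linarith
      rw [h2, hs]; ring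
    have : S i = ∑ j ∈ range n,
        (c (((j+1:ℕ):ZMod n) + i) * (b:ℤ)^(j+1) - c ((j:ZMod n) + i) * (b:ℤ)^j) :=
      Finset.sum_congr rfl fun j _ => key j
    rw [this, Finset.sum_range_sub (fun j => c ((j:ZMod n) + i) * (b:ℤ)^j)]
    have : ((n:ℕ):ZMod n) + i = i := by simp
    rw [this]
    simp [hqdef]; ring
  -- coprimality of q and b
  have hcop : IsCoprime q (b:ℤ) := by
    refine ⟨-1, (b:ℤ)^(n-1), ?_⟩
    have : (b:ℤ)^(n-1) * (b:ℤ) = (b:ℤ)^n := by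
      rw [← pow_succ, Nat.sub_add_cancel (Nat.one_le_iff_ne_zero.mpr hn)]
    rw [this, hqdef]; ring
  -- divisibility of S (-1) using h
  have hD : q ∣ S (-1) := by
    have hdvd : q ∣ (∑ i : ZMod n, s i * (b : ℤ) ^ i.val)
        - (∑ i : ZMod n, t i * (b : ℤ) ^ i.val) := Int.ModEq.dvd h.symm
    have hD' : (∑ i : ZMod n, s i * (b : ℤ) ^ i.val) - (∑ i : ZMod n, t i * (b : ℤ) ^ i.val)
        = ∑ i : ZMod n, d i * (b:ℤ)^ i.val := by
      rw [← Finset.sum_sub_distrib]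
      exact Finset.sum_congr rfl fun i _ => by simp [hddef]; ring
    have hconv : S (-1) = ∑ i : ZMod n, d i * (b:ℤ)^ i.val := by
      rw [hSdef]
      refine Finset.sum_nbij' (fun j => ((j:ZMod n))) (fun i => i.val) ?_ ?_ ?_ ?_ ?_
      · intro j hj; exact Finset.mem_univ _
      · intro i _; exact Finset.mem_range.mpr (ZMod.val_lt i)
      · intro j hj; exact ZMod.val_natCast_of_lt (Finset.mem_range.mp hj)
      · intro i _; exact ZMod.natCast_rightInverse i
      · intro j hj
        have : (j:ZMod n) + (-1) + 1 = (j:ZMod n) := by ring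
        rw [this, ZMod.val_natCast_of_lt (Finset.mem_range.mp hj)]
    rw [hconv, ← hD']
    exact hdvd
  -- divisibility of all S i
  have hSdvd : ∀ i : ZMod n, q ∣ S i := by
    have step : ∀ i : ZMod n, q ∣ S (i - 1) → q ∣ S i := by
      intro i hi
      have : q ∣ (b:ℤ) * S i := by
        have := tele i
        have : (b:ℤ) * S i = S (i - 1) + d i * q := by linarith
        rw [this]; exact dvd_add hi (Dvd.intro_left _ rfl)
      exact hcop.dvd_of_dvd_mul_left this
    have key : ∀ k : ℕ, q ∣ S ((k:ZMod n) - 1) := by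
      intro k
      induction k with
      | zero => simpa using hD
      | succ m ih =>
        have h1 : ((m+1:ℕ):ZMod n) - 1 = (m:ZMod n) := by push_cast; ring
        rw [h1]
        exact step (m:ZMod n) ih
    intro i
    have : i = ((i+1).val : ZMod n) - 1 := by rw [ZMod.natCast_rightInverse (i+1)]; ring
    rw [this]; exact key _
  -- the explicit solution
  set c0 : ZMod n → ℤ := fun i => S i / q with hc0def
  have hc0 : ∀ i, q * c0 i = S i := fun i => Int.mul_ediv_cancel' (hSdvd i)
  have hc0rec : ∀ i : ZMod n, s i + c0 (i - 1) = t i + (b : ℤ) * c0 i := by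
    intro i
    have hT := tele i
    apply mul_left_cancel₀ hq0
    have e1 : q * (s i + c0 (i-1)) = q * s i + S (i-1) := by rw [mul_add, hc0 (i-1)]
    have e2 : q * (t i + (b:ℤ) * c0 i) = q * t i + (b:ℤ) * S i := by
      rw [mul_add, ← hc0 i]; ring
    rw [e1, e2]
    have : d i = s i - t i := rfl
    rw [this] at hT
    linarith
  refine ⟨⟨c0, hc0rec, ?_⟩, ?_⟩
  · intro y hy
    funext i
    exact mul_left_cancel₀ hq0 (by rw [formula y hy i, hc0 i])
  · intro c hc i
    exact formula c hc i
end

section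
/- Let F be a finite field of order q = 3^n with n odd, and let r be a positive integer with gcd(r, n) = 1. Then the set T = {(v, w) ∈ (F*)² : v² = −w^{3^r − 1}·(w^{3^{2r} − 3^r} + 1)} has exactly q + 1 elements. -/
open Finset

private lemma aux_dvd_two (N k m : ℕ) (hk : k = N * m + 1) :
    Nat.gcd (3 ^ k - 1) (3 ^ N - 1) ∣ 2 := by
  set d := Nat.gcd (3 ^ k - 1) (3 ^ N - 1) with hd
  have h1 : d ∣ 3 ^ k - 1 := Nat.gcd_dvd_left _ _
  have h2 : d ∣ 3 ^ N - 1 := Nat.gcd_dvd_right _ _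
  have e1 : (3 : ZMod d) ^ k = 1 := by
    have h0 := (ZMod.natCast_eq_zero_iff _ d).mpr h1
    rw [Nat.cast_sub (Nat.one_le_pow _ _ (by norm_num))] at h0
    push_cast at h0
    rwa [sub_eq_zero] at h0
  have e2 : (3 : ZMod d) ^ N = 1 := by
    have h0 := (ZMod.natCast_eq_zero_iff _ d).mpr h2
    rw [Nat.cast_sub (Nat.one_le_pow _ _ (by norm_num))] at h0
    push_cast at h0
    rwa [sub_eq_zero] at h0
  have e3 : (3 : ZMod d) = 1 := by
    have : ((3 : ZMod d) ^ N) ^ m * 3 = 1 := by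
      rw [← pow_mul, ← pow_succ, ← hk, e1]
    rwa [e2, one_pow, one_mul] at this
  have e4 : ((2 : ℕ) : ZMod d) = 0 := by
    push_cast
    have : (2 : ZMod d) = 3 - 1 := by norm_num
    rw [this, e3, sub_self]
  exact (ZMod.natCast_eq_zero_iff 2 d).mp e4

theorem stmt_6 (F : Type*) [Field F] [Fintype F] (n r : ℕ) (hn : Odd n)
    (hcard : Fintype.card F = 3 ^ n) (hr : 0 < r) (hgcd : Nat.gcd r n = 1) :
    {vw : F × F | vw.1 ≠ 0 ∧ vw.2 ≠ 0 ∧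
      vw.1 ^ 2 = -vw.2 ^ (3 ^ r - 1) * (vw.2 ^ (3 ^ (2 * r) - 3 ^ r) + 1)}.ncard
      = 3 ^ n + 1 := by
  classical
  have hn1 : 1 ≤ n := hn.pos
  obtain ⟨m0, hprime, hcard'⟩ := FiniteField.card F (ringChar F)
  have hchar3 : ringChar F = 3 := by
    have hdvd : ringChar F ∣ 3 ^ n := by
      rw [← hcard, hcard']
      exact dvd_pow_self _ (by positivity)
    have h := hprime.dvd_of_dvd_pow hdvd
    exact (Nat.prime_dvd_prime_iff_eq hprime (by norm_num)).mp h
  haveI : CharP F 3 := hchar3 ▸ ringChar.charP F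
  haveI : Fact (Nat.Prime 3) := ⟨by norm_num⟩
  have hchar2 : ringChar F ≠ 2 := by rw [hchar3]; norm_num
  have hq4 : Fintype.card F % 4 = 3 := by
    obtain ⟨k, rfl⟩ := hn
    rw [hcard, pow_succ, pow_mul, Nat.mul_mod, Nat.pow_mod]
    norm_num
  have hns : ¬ IsSquare (-1 : F) := by
    simp [FiniteField.isSquare_neg_one_iff, hq4]
  have hodd3 : ∀ a : ℕ, Odd ((3:ℕ) ^ a) := fun a => Odd.pow (by decide)
  have hev1 : Even (3 ^ r - 1) := Nat.Odd.sub_odd (hodd3 r) odd_one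
  have hev2 : Even (3 ^ (2 * r) - 3 ^ r) := Nat.Odd.sub_odd (hodd3 _) (hodd3 _)
  set χ := quadraticChar F with hχ
  have hχquad := quadraticChar_isQuadratic F
  have hχsq : ∀ (x : F), x ≠ 0 → ∀ e : ℕ, Even e → χ (x ^ e) = 1 := by
    intro x hx e he
    obtain ⟨h, rfl⟩ := he
    rw [pow_add, ← sq]
    exact quadraticChar_sq_one' (pow_ne_zero _ hx)
  have hχm1 : χ (-1) = -1 := quadraticChar_neg_one_iff_not_isSquare.mpr hns
  set c : F → F := fun w => -w ^ (3 ^ r - 1) * (w ^ (3 ^ (2 * r) - 3 ^ r) + 1) with hc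
  have hc0 : ∀ w : F, w ≠ 0 → c w ≠ 0 := by
    intro w hw h
    rcases mul_eq_zero.mp h with h1 | h2
    · exact pow_ne_zero _ hw (neg_eq_zero.mp h1)
    · have hm1 : w ^ (3 ^ (2 * r) - 3 ^ r) = -1 := eq_neg_of_add_eq_zero_left h2
      obtain ⟨h', he'⟩ := hev2
      exact hns ⟨w ^ h', by rw [← hm1, he', pow_add]⟩
  have hkey : ∀ w : F, w ≠ 0 → χ (c w) = - χ (w ^ (3 ^ r - 1) + 1) := by
    intro w hw
    have h1 : w ^ (3 ^ (2 * r) - 3 ^ r) = (w ^ (3 ^ r - 1)) ^ (3:ℕ) ^ r := by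
      rw [← pow_mul]
      congr 1
      rw [Nat.sub_mul, one_mul, ← pow_add, two_mul]
    have h2 : (w ^ (3 ^ r - 1)) ^ (3:ℕ) ^ r + 1 = (w ^ (3 ^ r - 1) + 1) ^ (3:ℕ) ^ r := by
      rw [add_pow_char_pow, one_pow]
    have hcw : c w = (-1) * ((w ^ (3 ^ r - 1)) * (w ^ (3 ^ r - 1) + 1) ^ (3:ℕ) ^ r) := by
      rw [hc]
      dsimp only
      rw [h1, h2]
      ring
    have h3 : χ ((w ^ (3 ^ r - 1) + 1) ^ (3:ℕ) ^ r) = χ (w ^ (3 ^ r - 1) + 1) := by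
      rw [map_pow, ← MulChar.pow_apply' χ (pow_ne_zero r (by norm_num : (3:ℕ) ≠ 0)) (w ^ (3 ^ r - 1) + 1), hχquad.pow_odd (hodd3 r)]
    rw [hcw, map_mul, map_mul, hχm1, hχsq w hw _ hev1, h3]
    ring
  -- number of square roots
  have hfibcard : ∀ z : F, (((univ : Finset F).filter fun x : F => x ^ 2 = z).card : ℤ) = χ z + 1 := by
    intro z
    have h := quadraticChar_card_sqrts hchar2 z
    rw [Set.toFinset_setOf] at h
    rw [← h]
  -- sum over F of χ (x^2+1)
  have hsumS : ∑ x : F, χ (x ^ 2 + 1) = -1 := by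
    have e1 : ∑ x : F, χ (x ^ 2 + 1)
        = ∑ z : F, (((univ : Finset F).filter fun x : F => x ^ 2 = z).card : ℤ) * χ (z + 1) := by
      calc ∑ x : F, χ (x ^ 2 + 1)
          = ∑ x ∈ (univ : Finset F).filter (fun x : F => x ^ 2 ∈ (univ : Finset F)),
            χ (x ^ 2 + 1) := by simp
        _ = ∑ z : F, ∑ x ∈ (univ : Finset F).filter (fun x : F => x ^ 2 = z),
            χ (x ^ 2 + 1) :=
          (Finset.sum_fiberwise_eq_sum_filter univ univ (fun x : F => x ^ 2)
            (fun x : F => χ (x ^ 2 + 1))).symm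
        _ = ∑ z : F, (((univ : Finset F).filter fun x : F => x ^ 2 = z).card : ℤ) * χ (z + 1) := by
          refine Finset.sum_congr rfl fun z _ => ?_
          rw [Finset.sum_congr rfl (fun x hx => by rw [(Finset.mem_filter.mp hx).2] :
            ∀ x ∈ (univ : Finset F).filter fun x : F => x ^ 2 = z, χ (x ^ 2 + 1) = χ (z + 1))]
          rw [Finset.sum_const, nsmul_eq_mul]
    rw [e1]
    have e2 : ∑ z : F, (((univ : Finset F).filter fun x : F => x ^ 2 = z).card : ℤ) * χ (z + 1)
        = ∑ z : F, (χ z * χ (z + 1) + χ (z + 1)) := by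
      refine Finset.sum_congr rfl fun z _ => ?_
      rw [hfibcard z]; ring
    rw [e2, Finset.sum_add_distrib]
    have e3 : ∑ z : F, χ (z + 1) = 0 :=
      (Fintype.sum_equiv (Equiv.addRight (1:F)) (fun z => χ (z + 1)) (fun z => χ z)
        (fun z => rfl)).trans (quadraticChar_sum_zero hchar2)
    have e4 : ∑ z : F, χ z * χ (z + 1) = -1 := by
      have e5 : ∀ z : F, χ z * χ (z + 1) = χ (z * (z + 1)) := fun z => (map_mul χ _ _).symm
      simp only [e5]
      rw [← Finset.add_sum_erase univ _ (mem_univ (0:F))]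
      rw [show (0:F) * (0 + 1) = 0 by ring, quadraticChar_zero, zero_add]
      have e6 : ∀ z ∈ (univ : Finset F).erase 0, χ (z * (z + 1)) = χ (1 + z⁻¹) := by
        intro z hz
        have hz0 : z ≠ 0 := Finset.mem_erase.mp hz |>.1
        have : z * (z + 1) = z ^ 2 * (1 + z⁻¹) := by field_simp
        rw [this, map_mul, quadraticChar_sq_one' hz0, one_mul]
      rw [Finset.sum_congr rfl e6]
      have e7 : ∑ z ∈ (univ : Finset F).erase 0, χ (1 + z⁻¹)
          = ∑ z ∈ (univ : Finset F).erase 0, χ (1 + z) := by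
        refine Finset.sum_nbij' (fun z => z⁻¹) (fun z => z⁻¹) ?_ ?_ ?_ ?_ ?_
        · intro a ha
          exact Finset.mem_erase.mpr ⟨inv_ne_zero (Finset.mem_erase.mp ha).1, mem_univ _⟩
        · intro a ha
          exact Finset.mem_erase.mpr ⟨inv_ne_zero (Finset.mem_erase.mp ha).1, mem_univ _⟩
        · intro a _; exact inv_inv a
        · intro a _; exact inv_inv a
        · intro a _; rfl
      rw [e7]
      have e8 : χ (1 + (0:F)) + ∑ z ∈ (univ : Finset F).erase 0, χ (1 + z)
          = ∑ z : F, χ (1 + z) := Finset.add_sum_erase univ (fun z => χ (1 + z)) (mem_univ (0:F))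
      have e9 : ∑ z : F, χ (1 + z) = 0 :=
        (Fintype.sum_equiv (Equiv.addLeft (1:F)) (fun z => χ (1 + z)) (fun z => χ z)
          (fun z => rfl)).trans (quadraticChar_sum_zero hchar2)
      rw [e9] at e8
      simp only [add_zero, map_one] at e8
      linarith [e8]
    rw [e3, e4]; norm_num
  -- Bezout-style exponent choice
  obtain ⟨k, m, hkm, hkodd⟩ : ∃ k m : ℕ, r * k = n * m + 1 ∧ Odd k := by
    rcases eq_or_lt_of_le hn1 with h1 | h1
    · exact ⟨1, r - 1, by rw [← h1]; omega, odd_one⟩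
    · obtain ⟨k0, -, hk0⟩ := Nat.exists_mul_mod_eq_one_of_coprime hgcd h1
      have hdm := Nat.div_add_mod (r * k0) n
      rw [hk0] at hdm
      obtain ⟨a, ha⟩ : ∃ a, n * a + 1 = r * k0 := ⟨_, hdm⟩
      rcases Nat.even_or_odd k0 with he | ho
      · refine ⟨k0 + n, a + r, ?_, Even.add_odd he hn⟩
        rw [Nat.mul_add, ← ha]; ring
      · exact ⟨k0, a, ha.symm, ho⟩
  set E := ∑ i ∈ range k, ((3:ℕ) ^ r) ^ i with hE
  have h2le : (1:ℕ) ≤ 3 ^ r := Nat.one_le_pow _ _ (by norm_num)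
  have h3le : (1:ℕ) ≤ 3 ^ (r * k) := Nat.one_le_pow _ _ (by norm_num)
  have hgeom : E * (3 ^ r - 1) = 3 ^ (r * k) - 1 := by
    have h1 : ((E : ℤ)) * ((3:ℤ) ^ r - 1) = (3:ℤ) ^ (r * k) - 1 := by
      rw [hE]; push_cast
      rw [geom_sum_mul, ← pow_mul]
    zify [h2le, h3le]
    exact_mod_cast h1
  have hEodd : Odd E := by
    rw [Nat.odd_iff, hE, Finset.sum_nat_mod]
    have hmod : ∀ i ∈ range k, ((3:ℕ) ^ r) ^ i % 2 = 1 := by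
      intro i _
      rw [← pow_mul]
      exact Nat.odd_iff.mp (hodd3 _)
    rw [Finset.sum_congr rfl hmod, Finset.sum_const, card_range, smul_eq_mul, mul_one]
    exact Nat.odd_iff.mp hkodd
  have hcardU : Fintype.card Fˣ = 3 ^ n - 1 := by rw [Fintype.card_units, hcard]
  have hEcop : Nat.Coprime (Fintype.card Fˣ) E := by
    rw [hcardU]
    have hdE : Nat.gcd (3 ^ n - 1) E ∣ E := Nat.gcd_dvd_right _ _
    have hd2 : Nat.gcd (3 ^ n - 1) E ∣ 2 := by
      refine dvd_trans (Nat.dvd_gcd ?_ (Nat.gcd_dvd_left _ _)) (aux_dvd_two n (r * k) m hkm)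
      calc Nat.gcd (3 ^ n - 1) E ∣ E * (3 ^ r - 1) := Dvd.dvd.mul_right hdE _
        _ = 3 ^ (r * k) - 1 := hgeom
    rcases (Nat.dvd_prime Nat.prime_two).mp hd2 with h | h
    · exact h
    · exfalso
      rw [h] at hdE
      exact (Nat.not_even_iff_odd.mpr hEodd) (even_iff_two_dvd.mpr hdE)
  obtain ⟨s, hs⟩ : (3 ^ n - 1 : ℕ) ∣ 3 ^ (n * m) - 1 := by
    have h := Nat.sub_dvd_pow_sub_pow (3 ^ n) 1 m
    rwa [one_pow, ← pow_mul] at h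
  have hexp : 3 ^ (r * k) - 1 = 2 + (3 ^ n - 1) * (s * 3) := by
    obtain ⟨y, hy⟩ : ∃ y, (3 ^ n - 1) * s = y := ⟨_, rfl⟩
    have hX1 : (1:ℕ) ≤ 3 ^ (n * m) := Nat.one_le_pow _ _ (by norm_num)
    have h3rk : (3:ℕ) ^ (r * k) = 3 ^ (n * m) * 3 := by rw [hkm, pow_succ]
    have h1 : (3:ℕ) ^ (n * m) - 1 = y := by rw [hs, hy]
    have h2 : (3 ^ n - 1) * (s * 3) = y * 3 := by rw [← hy]; ring
    rw [h3rk, h2]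
    omega
  have hpow2 : ∀ u : Fˣ, u ^ (3 ^ (r * k) - 1) = u ^ 2 := by
    intro u
    have hu1 : u ^ ((3:ℕ) ^ n - 1) = 1 := by rw [← hcardU]; exact pow_card_eq_one
    rw [hexp, pow_add, pow_mul, hu1, one_pow, mul_one]
  have hmain_pow : ∀ u : Fˣ, (u ^ E) ^ (3 ^ r - 1) = u ^ 2 := by
    intro u
    rw [← pow_mul, hgeom, hpow2]
  have hBA : ∑ u : Fˣ, χ ((u : F) ^ (3 ^ r - 1) + 1) = ∑ u : Fˣ, χ ((u : F) ^ 2 + 1) := by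
    have hcop' : (Nat.card Fˣ).Coprime E := by rw [Nat.card_eq_fintype_card]; exact hEcop
    rw [← Equiv.sum_comp (powCoprime hcop') (fun u : Fˣ => χ ((u : F) ^ (3 ^ r - 1) + 1))]
    refine Fintype.sum_congr _ _ fun u => ?_
    show χ (((u ^ E : Fˣ) : F) ^ (3 ^ r - 1) + 1) = χ ((u : F) ^ 2 + 1)
    rw [← Units.val_pow_eq_pow_val, hmain_pow u, Units.val_pow_eq_pow_val]
  have hunit : ∀ g : F → ℤ, ∑ u : Fˣ, g (u : F) = ∑ x ∈ (univ : Finset F).erase 0, g x := by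
    intro g
    have h1 : ∑ u : Fˣ, g (u : F) = ∑ x : {x : F // x ≠ 0}, g (x : F) :=
      Fintype.sum_equiv unitsEquivNeZero (fun u : Fˣ => g (u : F))
        (fun x : {x : F // x ≠ 0} => g (x : F)) (fun u => rfl)
    have h2 : ∑ x ∈ (univ : Finset F).filter (fun x : F => x ≠ 0), g x
        = ∑ x : {x : F // x ≠ 0}, g x := Finset.sum_subtype _ (by simp) g
    rw [h1, ← h2, Finset.filter_ne']
  have hq1 : (1:ℕ) ≤ 3 ^ n := Nat.one_le_pow _ _ (by norm_num)
  have hcardE : ((((univ : Finset F).erase 0).card : ℕ) : ℤ) = (3:ℤ) ^ n - 1 := by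
    rw [Finset.card_erase_of_mem (mem_univ 0), card_univ, hcard]
    push_cast [hq1]
    ring
  have hsum2 : ∑ x ∈ (univ : Finset F).erase 0, χ (x ^ 2 + 1) = -2 := by
    have h := Finset.add_sum_erase univ (fun x : F => χ (x ^ 2 + 1)) (mem_univ (0:F))
    rw [hsumS] at h
    have h0 : χ ((0:F) ^ 2 + 1) = 1 := by
      rw [show ((0:F) ^ 2 + 1) = 1 by ring]
      exact map_one χ
    simp only [h0] at h
    linarith
  have hsub : {vw : F × F | vw.1 ≠ 0 ∧ vw.2 ≠ 0 ∧
      vw.1 ^ 2 = -vw.2 ^ (3 ^ r - 1) * (vw.2 ^ (3 ^ (2 * r) - 3 ^ r) + 1)}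
      = ↑((univ : Finset (F × F)).filter fun vw : F × F =>
          vw.1 ≠ 0 ∧ vw.2 ≠ 0 ∧ vw.1 ^ 2 = c vw.2) := by
    ext vw
    simp [hc]
  rw [hsub, Set.ncard_coe_finset]
  rw [Finset.card_eq_sum_card_fiberwise (f := fun vw : F × F => vw.2)
    (t := (univ : Finset F)) (fun x _ => mem_univ _)]
  have hfib2 : ∀ w : F,
      ((((univ : Finset (F × F)).filter fun vw : F × F =>
        vw.1 ≠ 0 ∧ vw.2 ≠ 0 ∧ vw.1 ^ 2 = c vw.2).filter fun vw => vw.2 = w).card)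
      = ((univ : Finset F).filter fun v : F => v ≠ 0 ∧ w ≠ 0 ∧ v ^ 2 = c w).card := by
    intro w
    refine Finset.card_bij' (fun vw _ => vw.1) (fun v _ => (v, w)) ?_ ?_ ?_ ?_
    · intro a ha
      simp only [mem_filter, mem_univ, true_and] at ha ⊢
      obtain ⟨⟨h1, h2, h3⟩, h4⟩ := ha
      subst h4
      exact ⟨h1, h2, h3⟩
    · intro v hv
      simp only [mem_filter, mem_univ, true_and] at hv ⊢
      exact ⟨⟨hv.1, hv.2.1, hv.2.2⟩, trivial⟩
    · intro a ha
      simp only [mem_filter] at ha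
      exact Prod.ext rfl ha.2.symm
    · intro v _
      rfl
  rw [Finset.sum_congr rfl (fun w _ => hfib2 w)]
  have hcount : ((∑ w : F, ((univ : Finset F).filter fun v : F =>
      v ≠ 0 ∧ w ≠ 0 ∧ v ^ 2 = c w).card : ℕ) : ℤ) = (3:ℤ) ^ n + 1 := by
    push_cast
    have hterm : ∀ w : F, (((univ : Finset F).filter fun v : F =>
        v ≠ 0 ∧ w ≠ 0 ∧ v ^ 2 = c w).card : ℤ) = if w ≠ 0 then χ (c w) + 1 else 0 := by
      intro w
      by_cases hw : w = 0
      · simp [hw]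
      · rw [if_pos hw]
        have hfe : ((univ : Finset F).filter fun v : F => v ≠ 0 ∧ w ≠ 0 ∧ v ^ 2 = c w)
            = (univ : Finset F).filter fun v : F => v ^ 2 = c w := by
          ext v
          simp only [mem_filter, mem_univ, true_and]
          constructor
          · exact fun h => h.2.2
          · intro h
            refine ⟨?_, hw, h⟩
            intro hv0
            rw [hv0] at h
            apply hc0 w hw
            rw [← h]
            norm_num
        rw [hfe, hfibcard (c w)]
    calc ∑ w : F, (((univ : Finset F).filter fun v : F =>
        v ≠ 0 ∧ w ≠ 0 ∧ v ^ 2 = c w).card : ℤ)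
        = ∑ w : F, if w ≠ 0 then χ (c w) + 1 else 0 := Finset.sum_congr rfl fun w _ => hterm w
      _ = ∑ w ∈ (univ : Finset F).filter (fun w : F => w ≠ 0), (χ (c w) + 1) :=
        (Finset.sum_filter _ _).symm
      _ = ∑ w ∈ (univ : Finset F).erase 0, (χ (c w) + 1) := by rw [Finset.filter_ne']
      _ = (∑ w ∈ (univ : Finset F).erase 0, χ (c w)) + (((univ : Finset F).erase 0).card : ℤ) := by
        rw [Finset.sum_add_distrib, Finset.sum_const, nsmul_eq_mul, mul_one]
      _ = (3:ℤ) ^ n + 1 := by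
        have hcc : ∑ w ∈ (univ : Finset F).erase 0, χ (c w)
            = - ∑ w ∈ (univ : Finset F).erase 0, χ (w ^ (3 ^ r - 1) + 1) := by
          rw [← Finset.sum_neg_distrib]
          exact Finset.sum_congr rfl fun w hw => hkey w (Finset.mem_erase.mp hw).1
        have hrr : ∑ w ∈ (univ : Finset F).erase 0, χ (w ^ (3 ^ r - 1) + 1)
            = ∑ w ∈ (univ : Finset F).erase 0, χ (w ^ 2 + 1) := by
          rw [← hunit (fun x => χ (x ^ (3 ^ r - 1) + 1)), ← hunit (fun x => χ (x ^ 2 + 1))]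
          exact hBA
        rw [hcc, hrr, hsum2, hcardE]
        ring
  exact_mod_cast hcount
end

section
/- Let F be a finite field of order q, ψ its canonical additive character, and d a positive integer with gcd(d, q − 1) = 1. Then ∑_{a ∈ F*} W(a) = q and ∑_{a ∈ F*} W(a)² = q², where W(a) = ∑_{x ∈ F} ψ(x^d − a·x). -/
/-- The canonical additive character of a finite field `F` of characteristic `p`:
`ψ(x) = exp(2πi·Tr(x)/p)`, where `Tr` is the absolute trace. -/
noncomputable def canonicalPsi (p : ℕ) (F : Type*) [Field F] [Fintype F]
    [Algebra (ZMod p) F] (x : F) : ℂ :=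
  Complex.exp (2 * Real.pi * Complex.I * ((Algebra.trace (ZMod p) F x).val : ℂ) / p)

section aux

variable (p : ℕ) [Fact p.Prime] (F : Type*) [Field F] [Fintype F]
    [Algebra (ZMod p) F]

/-- `canonicalPsi` as an additive character. -/
noncomputable def psiChar : AddChar F ℂ :=
  ZMod.stdAddChar.compAddMonoidHom (Algebra.trace (ZMod p) F).toAddMonoidHom

lemma canonicalPsi_eq (x : F) : canonicalPsi p F x = psiChar p F x := by
  rw [canonicalPsi, psiChar, AddChar.compAddMonoidHom_apply, ZMod.stdAddChar_apply,
    ZMod.toCircle_apply]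
  simp

lemma psiChar_ne_one [CharP F p] : psiChar p F ≠ 1 := by
  have hp : ringChar F = p := ringChar.eq F p
  subst hp
  obtain ⟨a, ha⟩ := FiniteField.trace_to_zmod_nondegenerate F (one_ne_zero (α := F))
  rw [one_mul] at ha
  refine AddChar.ne_one_iff.2 ⟨a, fun hf => ha ?_⟩
  rw [psiChar, AddChar.compAddMonoidHom_apply] at hf
  rw [← AddChar.map_zero_eq_one (ZMod.stdAddChar (N := ringChar F))] at hf
  exact ZMod.injective_stdAddChar hf

lemma psiChar_prim [CharP F p] : (psiChar p F).IsPrimitive :=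
  AddChar.IsPrimitive.of_ne_one (psiChar_ne_one p F)

end aux

theorem stmt_10 (p : ℕ) [Fact p.Prime] (F : Type*) [Field F] [Fintype F]
    [DecidableEq F] [Algebra (ZMod p) F] [CharP F p]
    (d : ℕ) (hd : 0 < d) (hgcd : Nat.gcd d (Fintype.card F - 1) = 1) :
    (∑ a ∈ Finset.univ.filter (fun a : F => a ≠ 0),
        ∑ x : F, canonicalPsi p F (x ^ d - a * x)) = (Fintype.card F : ℂ) ∧
    (∑ a ∈ Finset.univ.filter (fun a : F => a ≠ 0),
        (∑ x : F, canonicalPsi p F (x ^ d - a * x)) ^ 2) = (Fintype.card F : ℂ) ^ 2 := by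
  have hpsi : ∀ y : F, canonicalPsi p F y = psiChar p F y := canonicalPsi_eq p F
  simp only [hpsi]
  set q := Fintype.card F with hq
  set ψ := psiChar p F with hψ
  -- x ↦ x^d is bijective
  have hbij : Function.Bijective (fun x : F => x ^ d) := by
    refine Finite.injective_iff_bijective.1 ?_
    intro x y hxy
    simp only at hxy
    rcases eq_or_ne x 0 with rfl | hx
    · exact ((pow_eq_zero_iff hd.ne').1 (by simpa [zero_pow hd.ne'] using hxy.symm)).symm
    rcases eq_or_ne y 0 with rfl | hy
    · exact (pow_eq_zero_iff hd.ne').1 (by simpa [zero_pow hd.ne'] using hxy)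
    · have hcop : (Nat.card Fˣ).Coprime d := by
        rw [Nat.card_eq_fintype_card, Fintype.card_units, Nat.coprime_comm]
        exact hgcd
      have h := (powCoprime hcop).injective (a₁ := Units.mk0 x hx) (a₂ := Units.mk0 y hy)
        (by ext; simpa [powCoprime] using hxy)
      exact congrArg Units.val h
  -- sum of ψ over x^d is zero
  have hsum0 : (∑ x : F, ψ x) = 0 := AddChar.sum_eq_zero_of_ne_one (psiChar_ne_one p F)
  have hsumd : (∑ x : F, ψ (x ^ d)) = 0 :=
    (Fintype.sum_bijective _ hbij _ _ fun x => rfl).trans hsum0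
  have hshift : ∀ b : F, (∑ a : F, ψ (a * b)) = if b = 0 then (q : ℂ) else 0 := by
    intro b
    have := AddChar.sum_mulShift b (psiChar_prim p F)
    rw [← hψ, ← hq] at this
    rw [this]
    split_ifs <;> simp
  -- x^d + (-x)^d = 0 for all x
  have hkey : ∀ x : F, x ^ d + (-x) ^ d = 0 := by
    intro x
    rcases Nat.even_or_odd d with hev | hod
    · have h2 : p = 2 := by
        by_contra hp2
        have hpodd : Odd p := (Fact.out (p := p.Prime)).odd_of_ne_two hp2
        obtain ⟨n, hn, hcard⟩ := FiniteField.card F p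
        have hqodd : Odd q := by rw [hq, hcard]; exact hpodd.pow
        have : 2 ∣ Nat.gcd d (q - 1) := Nat.dvd_gcd hev.two_dvd (by
          obtain ⟨k, hk⟩ := hqodd; simp [hk])
        omega
      subst h2
      rw [CharTwo.neg_eq]
      exact CharTwo.add_self_eq_zero _
    · rw [hod.neg_pow]; ring
  have filter_eq : (Finset.univ.filter (fun a : F => a ≠ 0)) = Finset.univ.erase 0 := by
    ext a; simp [Finset.mem_erase, and_comm]
  have hq1 : ψ 0 = 1 := AddChar.map_zero_eq_one ψ
  constructor
  · -- first moment
    have hall : (∑ a : F, ∑ x : F, ψ (x ^ d - a * x)) = (q : ℂ) := by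
      rw [Finset.sum_comm]
      have hx : ∀ x : F, (∑ a : F, ψ (x ^ d - a * x)) =
          ψ (x ^ d) * (if -x = 0 then (q : ℂ) else 0) := by
        intro x
        rw [← hshift (-x), Finset.mul_sum]
        refine Finset.sum_congr rfl fun a _ => ?_
        rw [← AddChar.map_add_eq_mul]
        ring_nf
      simp_rw [hx, neg_eq_zero, mul_ite, mul_zero]
      rw [Finset.sum_ite_eq' Finset.univ (0 : F)]
      simp [zero_pow hd.ne', hq1]
    rw [filter_eq, Finset.sum_erase_eq_sub (Finset.mem_univ 0), hall]
    simp [zero_mul, hsumd]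
  · -- second moment
    have hsq : ∀ a : F, (∑ x : F, ψ (x ^ d - a * x)) ^ 2 =
        ∑ x : F, ∑ y : F, ψ (x ^ d - a * x) * ψ (y ^ d - a * y) := by
      intro a; rw [sq, Finset.sum_mul_sum]
    simp_rw [hsq]
    have hall : (∑ a : F, ∑ x : F, ∑ y : F, ψ (x ^ d - a * x) * ψ (y ^ d - a * y))
        = (q : ℂ) ^ 2 := by
      rw [Finset.sum_comm]
      have hx : ∀ x : F, (∑ a : F, ∑ y : F, ψ (x ^ d - a * x) * ψ (y ^ d - a * y))
          = ∑ y : F, ψ (x ^ d + y ^ d) * (if -(x + y) = 0 then (q : ℂ) else 0) := by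
        intro x
        rw [Finset.sum_comm]
        refine Finset.sum_congr rfl fun y _ => ?_
        rw [← hshift (-(x + y)), Finset.mul_sum]
        refine Finset.sum_congr rfl fun a _ => ?_
        rw [← AddChar.map_add_eq_mul, ← AddChar.map_add_eq_mul]
        ring_nf
      simp_rw [hx, neg_eq_zero, add_eq_zero_iff_neg_eq, mul_ite, mul_zero]
      have hy : ∀ x : F, (∑ y : F, if -x = y then ψ (x ^ d + y ^ d) * (q : ℂ) else 0)
          = (q : ℂ) := by
        intro x
        rw [Finset.sum_ite_eq Finset.univ (-x)]
        simp [hkey x, hq1]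
      simp_rw [hy]
      rw [Finset.sum_const, Finset.card_univ, nsmul_eq_mul, sq, ← hq]
    rw [filter_eq, Finset.sum_erase_eq_sub (Finset.mem_univ 0), hall]
    have h0 : (∑ x : F, ∑ y : F, ψ (x ^ d - 0 * x) * ψ (y ^ d - 0 * y)) = 0 := by
      simp only [zero_mul, sub_zero]
      rw [← Finset.sum_mul_sum, hsumd, zero_mul]
    rw [h0, sub_zero]
end

section
/- Let n be odd and r a positive integer with gcd(3^r + 2, 3^n − 1) = 1 and gcd(r, n) = 1. Then gcd(2 − 3^r − 3^{2r}, 3^n − 1) = 2 and gcd(3^{2r} − 3^r, 3^n − 1) = 2. -/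
lemma key_gcd (r n : ℕ) (h : Nat.gcd r n = 1) :
    Nat.gcd (3 ^ r - 1) (3 ^ n - 1) = 2 := by
  set d := Nat.gcd (3 ^ r - 1) (3 ^ n - 1) with hd
  have hpr : 1 ≤ 3 ^ r := Nat.one_le_pow _ _ (by norm_num)
  have hpn : 1 ≤ 3 ^ n := Nat.one_le_pow _ _ (by norm_num)
  have h1 : (3 : ZMod d) ^ r = 1 := by
    have : ((3 ^ r - 1 : ℕ) : ZMod d) = 0 := by
      rw [ZMod.natCast_eq_zero_iff]; exact Nat.gcd_dvd_left _ _
    rw [Nat.cast_sub hpr] at this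
    push_cast at this
    linear_combination this
  have h2 : (3 : ZMod d) ^ n = 1 := by
    have : ((3 ^ n - 1 : ℕ) : ZMod d) = 0 := by
      rw [ZMod.natCast_eq_zero_iff]; exact Nat.gcd_dvd_right _ _
    rw [Nat.cast_sub hpn] at this
    push_cast at this
    linear_combination this
  have ho : orderOf (3 : ZMod d) ∣ Nat.gcd r n :=
    Nat.dvd_gcd (orderOf_dvd_of_pow_eq_one h1) (orderOf_dvd_of_pow_eq_one h2)
  rw [h, Nat.dvd_one] at ho
  have h3 : (3 : ZMod d) = 1 := orderOf_eq_one_iff.mp ho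
  have hdvd2 : d ∣ 2 := by
    have : ((2 : ℕ) : ZMod d) = 0 := by
      push_cast
      linear_combination h3
    rwa [ZMod.natCast_eq_zero_iff] at this
  have h2dvd : 2 ∣ d := by
    have hr2 : 3 ^ r % 2 = 1 := by simp [Nat.pow_mod]
    have hn2 : 3 ^ n % 2 = 1 := by simp [Nat.pow_mod]
    exact Nat.dvd_gcd (by omega) (by omega)
  exact Nat.dvd_antisymm hdvd2 h2dvd

theorem stmt_17 (n r : ℕ) (hn : Odd n) (hnpos : 0 < n) (hr : 0 < r)
    (hrn : Nat.gcd r n = 1) (hd : Nat.gcd (3 ^ r + 2) (3 ^ n - 1) = 1) :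
    Int.gcd (2 - 3 ^ r - 3 ^ (2 * r)) ((3 : ℤ) ^ n - 1) = 2 ∧
    Int.gcd ((3 : ℤ) ^ (2 * r) - 3 ^ r) ((3 : ℤ) ^ n - 1) = 2 := by
  have hpr : 1 ≤ 3 ^ r := Nat.one_le_pow _ _ (by norm_num)
  have hpn : 1 ≤ 3 ^ n := Nat.one_le_pow _ _ (by norm_num)
  have c1 : ((3 ^ r - 1 : ℕ) : ℤ) = 3 ^ r - 1 := by push_cast [Nat.cast_sub hpr]; ring
  have c2 : ((3 ^ n - 1 : ℕ) : ℤ) = 3 ^ n - 1 := by push_cast [Nat.cast_sub hpn]; ring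
  have hkey := key_gcd r n hrn
  constructor
  · rw [show (2 - 3 ^ r - 3 ^ (2 * r) : ℤ) = -((3 ^ r + 2) * (3 ^ r - 1)) by ring]
    rw [Int.neg_gcd]
    rw [show ((3 ^ r + 2) * (3 ^ r - 1) : ℤ) = (((3 ^ r + 2) * (3 ^ r - 1) : ℕ) : ℤ) by
      push_cast [Nat.cast_sub hpr]; ring]
    rw [show ((3 : ℤ) ^ n - 1) = (((3 ^ n - 1 : ℕ)) : ℤ) from c2.symm]
    rw [Int.gcd_natCast_natCast]
    have hcop : Nat.Coprime (3 ^ r + 2) (3 ^ n - 1) := hd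
    rw [hcop.gcd_mul_left_cancel]
    exact hkey
  · rw [show ((3 : ℤ) ^ (2 * r) - 3 ^ r) = ((3 ^ r * (3 ^ r - 1) : ℕ) : ℤ) by
      push_cast [Nat.cast_sub hpr]; ring]
    rw [show ((3 : ℤ) ^ n - 1) = (((3 ^ n - 1 : ℕ)) : ℤ) from c2.symm]
    rw [Int.gcd_natCast_natCast]
    have hcop3 : Nat.Coprime 3 (3 ^ n - 1) := by
      rw [Nat.Prime.coprime_iff_not_dvd (by norm_num)]
      have : 3 ∣ 3 ^ n := dvd_pow_self 3 hnpos.ne'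
      have h3n : 3 ≤ 3 ^ n := by
        calc 3 = 3 ^ 1 := (pow_one 3).symm
        _ ≤ 3 ^ n := Nat.pow_le_pow_right (by norm_num) hnpos
      omega
    have hcop : Nat.Coprime (3 ^ r) (3 ^ n - 1) := hcop3.pow_left _
    rw [hcop.gcd_mul_left_cancel]
    exact key_gcd r n hrn
end

section
/- Let F be a finite field of order q = 3^n with n odd, r with 4r ≡ 1 (mod n), d = 3^r + 2, and ψ the canonical additive character of F. If, for every a ∈ F, W(a) = ∑_{x ∈ F} ψ(x^d − a·x) is a rational integer divisible by 3^{(n+1)/2}, and ∑_{a ≠ 0} W(a)⁴ = 3q³ and ∑_{a ≠ 0} W(a)² = q², then W(a) ∈ {0, 3^{(n+1)/2}, −3^{(n+1)/2}} for every a ∈ F*. -/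
theorem stmt_18 (F : Type*) [Field F] [Fintype F] [DecidableEq F] [Algebra (ZMod 3) F]
    (n r : ℕ) (hn : Odd n) (hcard : Fintype.card F = 3 ^ n)
    (h4r : 4 * r ≡ 1 [MOD n]) (d : ℕ) (hdef : d = 3 ^ r + 2)
    (W : F → ℂ) (hW : ∀ a : F, W a = ∑ x : F, canonicalPsi 3 F (x ^ d - a * x))
    (hdiv : ∀ a : F, ∃ k : ℤ, W a = ((3 ^ ((n + 1) / 2) * k : ℤ) : ℂ))
    (h4 : ∑ a ∈ Finset.univ.filter (fun a : F => a ≠ 0), (W a) ^ 4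
        = 3 * ((3 : ℂ) ^ n) ^ 3)
    (h2 : ∑ a ∈ Finset.univ.filter (fun a : F => a ≠ 0), (W a) ^ 2
        = ((3 : ℂ) ^ n) ^ 2) :
    ∀ a : F, a ≠ 0 →
      W a = 0 ∨ W a = (3 : ℂ) ^ ((n + 1) / 2) ∨ W a = -(3 : ℂ) ^ ((n + 1) / 2) := by
  classical
  choose k hk using hdiv
  obtain ⟨t, ht⟩ := hn
  set m := (n + 1) / 2 with hm
  have hm2 : 2 * m = n + 1 := by omega
  set S := Finset.univ.filter (fun a : F => a ≠ 0) with hS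
  -- fourth moment over ℤ
  have e4 : ∑ a ∈ S, W a ^ 4 = ((∑ a ∈ S, (3 ^ m * k a) ^ 4 : ℤ) : ℂ) := by
    push_cast
    refine Finset.sum_congr rfl fun a _ => ?_
    rw [hk a]; push_cast; ring
  have e2 : ∑ a ∈ S, W a ^ 2 = ((∑ a ∈ S, (3 ^ m * k a) ^ 2 : ℤ) : ℂ) := by
    push_cast
    refine Finset.sum_congr rfl fun a _ => ?_
    rw [hk a]; push_cast; ring
  have z4 : (∑ a ∈ S, (3 ^ m * k a) ^ 4 : ℤ) = 3 ^ (3 * n + 1) := by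
    have : ((∑ a ∈ S, (3 ^ m * k a) ^ 4 : ℤ) : ℂ) = ((3 ^ (3 * n + 1) : ℤ) : ℂ) := by
      rw [← e4, h4]; push_cast; ring
    exact_mod_cast this
  have z2 : (∑ a ∈ S, (3 ^ m * k a) ^ 2 : ℤ) = 3 ^ (2 * n) := by
    have : ((∑ a ∈ S, (3 ^ m * k a) ^ 2 : ℤ) : ℂ) = ((3 ^ (2 * n) : ℤ) : ℂ) := by
      rw [← e2, h2]; push_cast; ring
    exact_mod_cast this
  have f4 : (3 : ℤ) ^ (4 * m) * ∑ a ∈ S, k a ^ 4 = 3 ^ (3 * n + 1) := by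
    rw [Finset.mul_sum, ← z4]
    exact Finset.sum_congr rfl fun a _ => by rw [mul_pow, ← pow_mul]; ring_nf
  have f2 : (3 : ℤ) ^ (2 * m) * ∑ a ∈ S, k a ^ 2 = 3 ^ (2 * n) := by
    rw [Finset.mul_sum, ← z2]
    exact Finset.sum_congr rfl fun a _ => by rw [mul_pow, ← pow_mul]; ring_nf
  have h3ne : (3 : ℤ) ^ (4 * m) ≠ 0 := by positivity
  have h3ne2 : (3 : ℤ) ^ (2 * m) ≠ 0 := by positivity
  have s4 : ∑ a ∈ S, k a ^ 4 = 3 ^ (n - 1) := by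
    apply mul_left_cancel₀ h3ne
    rw [f4, ← pow_add]
    congr 1
    omega
  have s2 : ∑ a ∈ S, k a ^ 2 = 3 ^ (n - 1) := by
    apply mul_left_cancel₀ h3ne2
    rw [f2, ← pow_add]
    congr 1
    omega
  have key : ∑ a ∈ S, (k a ^ 4 - k a ^ 2) = 0 := by
    rw [Finset.sum_sub_distrib, s4, s2, sub_self]
  have hnn : ∀ a ∈ S, 0 ≤ k a ^ 4 - k a ^ 2 := by
    intro a _
    rcases eq_or_ne (k a) 0 with h | h
    · simp [h]
    · have h1 : 1 ≤ (k a) ^ 2 := by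
        rcases lt_trichotomy (k a) 0 with h' | h' | h' <;> [nlinarith; exact absurd h' h; nlinarith]
      nlinarith
  have hzero := (Finset.sum_eq_zero_iff_of_nonneg hnn).mp key
  intro a ha
  have haS : a ∈ S := by simp [hS, ha]
  have heq : k a ^ 4 - k a ^ 2 = 0 := hzero a haS
  have hcases : k a = 0 ∨ k a = 1 ∨ k a = -1 := by
    by_contra hc
    push_neg at hc
    obtain ⟨h0, h1, h2'⟩ := hc
    have : 2 ≤ k a ∨ k a ≤ -2 := by omega
    have hk2 : 4 ≤ k a ^ 2 := by rcases this with h' | h' <;> nlinarith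
    nlinarith [heq, hk2, sq_nonneg (k a ^ 2 - 4)]
  rcases hcases with h | h | h
  · left; rw [hk a, h]; push_cast; ring
  · right; left; rw [hk a, h]; push_cast; ring
  · right; right; rw [hk a, h]; push_cast; ring
end

section
/- Let F be a finite field of characteristic p and d a positive integer coprime to |F| − 1. The Weil sum W(a) = ∑_{x ∈ F} ψ(x^d − a·x), with ψ the canonical additive character, is a rational integer for all a ∈ F if d ≡ 1 (mod p − 1). -/
theorem stmt_19 (p : ℕ) [Fact p.Prime] (F : Type*) [Field F] [Fintype F]
    [Algebra (ZMod p) F] [CharP F p]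
    (d : ℕ) (hd : 0 < d) (hgcd : Nat.gcd d (Fintype.card F - 1) = 1)
    (hcong : d ≡ 1 [MOD p - 1]) :
    ∀ a : F, ∃ k : ℤ, (∑ x : F, canonicalPsi p F (x ^ d - a * x)) = (k : ℂ) := by
  intro a
  have hp : p.Prime := Fact.out
  have hp1 : 1 < p := hp.one_lt
  have hpC : (p : ℂ) ≠ 0 := Nat.cast_ne_zero.mpr hp.pos.ne'
  set ζ : ℂ := Complex.exp (2 * Real.pi * Complex.I / p) with hζ
  set f : F → ZMod p := fun x => Algebra.trace (ZMod p) F (x ^ d - a * x) with hf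
  have hpsi : ∀ x : F, canonicalPsi p F (x ^ d - a * x) = ζ ^ (f x).val := by
    intro x
    rw [hζ, ← Complex.exp_nat_mul]
    unfold canonicalPsi
    congr 1
    simp only [hf]
    ring
  -- units of ZMod p satisfy u ^ d = u
  have hupow : ∀ u : (ZMod p)ˣ, u ^ d = u := by
    intro u
    have h1 : orderOf u ∣ p - 1 := by
      have := orderOf_dvd_card (x := u)
      rwa [ZMod.card_units_eq_totient, Nat.totient_prime hp] at this
    have hmod : d ≡ 1 [MOD orderOf u] := hcong.of_dvd h1
    calc u ^ d = u ^ 1 := (pow_eq_pow_iff_modEq.mpr hmod)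
    _ = u := pow_one u
  have hgen : ∀ (u : (ZMod p)ˣ) (x : F),
      f (algebraMap (ZMod p) F (u : ZMod p) * x) = (u : ZMod p) * f x := by
    intro u x
    set c : F := algebraMap (ZMod p) F (u : ZMod p) with hc
    have hcd : c ^ d = c := by
      rw [hc, ← map_pow, ← Units.val_pow_eq_pow_val, hupow]
    have hkey : (c * x) ^ d - a * (c * x) = c * (x ^ d - a * x) := by
      rw [mul_pow, hcd]; ring
    show Algebra.trace (ZMod p) F ((c * x) ^ d - a * (c * x)) = _
    rw [hkey, hc, ← Algebra.smul_def, map_smul, smul_eq_mul]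
  have hcount : ∀ (s : (ZMod p)ˣ) (n : ZMod p),
      (Finset.univ.filter fun x : F => f x = (s : ZMod p) * n).card
        = (Finset.univ.filter fun x : F => f x = n).card := by
    intro s n
    refine Finset.card_nbij' (fun x => algebraMap (ZMod p) F ((s⁻¹ : (ZMod p)ˣ) : ZMod p) * x)
      (fun x => algebraMap (ZMod p) F ((s : (ZMod p)ˣ) : ZMod p) * x) ?_ ?_ ?_ ?_
    · intro x hx
      simp only [Finset.mem_coe, Finset.mem_filter, Finset.mem_univ, true_and] at hx ⊢
      rw [hgen, hx, ← mul_assoc, ← Units.val_mul, inv_mul_cancel, Units.val_one, one_mul]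
    · intro x hx
      simp only [Finset.mem_coe, Finset.mem_filter, Finset.mem_univ, true_and] at hx ⊢
      rw [hgen, hx]
    · intro x _
      simp only [← mul_assoc, ← map_mul, ← Units.val_mul, mul_inv_cancel, Units.val_one,
        map_one, one_mul]
    · intro x _
      simp only [← mul_assoc, ← map_mul, ← Units.val_mul, inv_mul_cancel, Units.val_one,
        map_one, one_mul]
  have hconst : ∀ n : ZMod p, n ≠ 0 →
      (Finset.univ.filter fun x : F => f x = n).card
        = (Finset.univ.filter fun x : F => f x = 1).card := by
    intro n hn
    have := hcount (Units.mk0 n hn) 1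
    simpa using this
  set c0 := (Finset.univ.filter fun x : F => f x = 0).card with hc0
  set c1 := (Finset.univ.filter fun x : F => f x = 1).card with hc1
  refine ⟨(c0 : ℤ) - c1, ?_⟩
  have hprim : IsPrimitiveRoot ζ p := Complex.isPrimitiveRoot_exp p hp.pos.ne'
  have hS : ∑ n : ZMod p, ζ ^ n.val = 0 := by
    have hgeo := hprim.geom_sum_eq_zero hp1
    rw [← hgeo]
    refine Finset.sum_nbij' (i := fun n : ZMod p => n.val) (j := fun i : ℕ => (i : ZMod p))
      ?_ ?_ ?_ ?_ ?_
    · intro n _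
      exact Finset.mem_range.mpr (ZMod.val_lt n)
    · intro i _
      exact Finset.mem_univ _
    · intro n _
      simp [ZMod.natCast_val, ZMod.cast_id]
    · intro i hi
      exact ZMod.val_natCast_of_lt (Finset.mem_range.mp hi)
    · intro n _
      rfl
  have hsum : (∑ x : F, canonicalPsi p F (x ^ d - a * x))
      = ∑ n : ZMod p, ((Finset.univ.filter fun x : F => f x = n).card : ℂ) * ζ ^ n.val := by
    rw [← Finset.sum_fiberwise Finset.univ f (fun x => canonicalPsi p F (x ^ d - a * x))]
    refine Finset.sum_congr rfl fun n _ => ?_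
    rw [Finset.sum_congr rfl (fun x hx => ?_), Finset.sum_const, nsmul_eq_mul]
    have hx' : f x = n := (Finset.mem_filter.mp hx).2
    rw [hpsi, hx']
  rw [hsum]
  have hsplit : ∑ n : ZMod p, ((Finset.univ.filter fun x : F => f x = n).card : ℂ) * ζ ^ n.val
      = (c0 : ℂ) * ζ ^ (0 : ZMod p).val
        + ∑ n ∈ Finset.univ.erase (0 : ZMod p),
            ((Finset.univ.filter fun x : F => f x = n).card : ℂ) * ζ ^ n.val := by
    rw [← Finset.add_sum_erase _ _ (Finset.mem_univ (0 : ZMod p))]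
  rw [hsplit]
  have herase : ∑ n ∈ Finset.univ.erase (0 : ZMod p),
      ((Finset.univ.filter fun x : F => f x = n).card : ℂ) * ζ ^ n.val
      = (c1 : ℂ) * ∑ n ∈ Finset.univ.erase (0 : ZMod p), ζ ^ n.val := by
    rw [Finset.mul_sum]
    refine Finset.sum_congr rfl fun n hn => ?_
    rw [hconst n (Finset.mem_erase.mp hn).1]
  have herase2 : ∑ n ∈ Finset.univ.erase (0 : ZMod p), ζ ^ n.val
      = -1 := by
    have := Finset.add_sum_erase Finset.univ (fun n : ZMod p => ζ ^ n.val)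
      (Finset.mem_univ (0 : ZMod p))
    rw [hS] at this
    simp only [ZMod.val_zero, pow_zero] at this
    linear_combination this
  rw [herase, herase2, ZMod.val_zero, pow_zero]
  push_cast
  ring
end
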